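/- Dyson-series composition law: for t₁ ≤ s ≤ t₂, the time-ordered exponential satisfies R(t₂, t₁) = R(t₂, s) · R(s, t₁), where R(b,a) = Σ_j (−1)^j ∫_{a ≤ s_j ≤ ⋯ ≤ s₁ ≤ b} A(s₁)⋯A(s_j) ds. -/

import Mathlib

noncomputable section

open intervalIntegral

variable {B : Type*} [NormedRing B] [NormedAlgebra ℝ B] [CompleteSpace B]

/-- The `j`-th iterated Dyson integral: `dyson A t₁ j t` equals the simplex integral
`∫_{t₁ ≤ s_j ≤ ⋯ ≤ s₁ ≤ t} A(s₁) ⋯ A(s_j) ds`. -/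
def dyson (A : ℝ → B) (t₁ : ℝ) : ℕ → ℝ → B
  | 0 => fun _ => 1
  | j + 1 => fun t => ∫ s in t₁..t, A s * dyson A t₁ j s

/-- The time-ordered exponential `R(b, a) = Σ_j (-1)^j ∫_{a≤s_j≤⋯≤s₁≤b} A(s₁)⋯A(s_j) ds`. -/
def timeOrderedExp (A : ℝ → B) (a b : ℝ) : B := ∑' j : ℕ, ((-1 : ℝ) ^ j) • dyson A a j b

lemma dyson_continuous (A : ℝ → B) (hA : Continuous A) (t₁ : ℝ) :
    ∀ n, Continuous (dyson A t₁ n) := by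
  intro n
  induction n with
  | zero => exact continuous_const
  | succ n ih =>
    exact intervalIntegral.continuous_primitive
      (fun a b => (hA.mul ih).intervalIntegrable a b) t₁

lemma integral_mul_const' (f : ℝ → B) (hf : Continuous f) (a b : ℝ) (c : B) :
    (∫ u in a..b, f u * c) = (∫ u in a..b, f u) * c := by
  have := ((ContinuousLinearMap.mul ℝ B).flip c).intervalIntegral_comp_comm
    (μ := MeasureTheory.volume) (f := f) (a := a) (b := b) (hf.intervalIntegrable a b)
  simpa using this

lemma dyson_norm_le (A : ℝ → B) (hA : Continuous A) (a b M : ℝ)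
    (hM : ∀ u ∈ Set.Icc a b, ‖A u‖ ≤ M) :
    ∀ n, ∀ t ∈ Set.Icc a b,
      ‖dyson A a n t‖ ≤ ‖(1 : B)‖ * ((M * (t - a)) ^ n / n.factorial) := by
  have hM0 : a ≤ b → 0 ≤ M := by
    intro hab
    exact (norm_nonneg _).trans (hM a ⟨le_refl a, hab⟩)
  intro n
  induction n with
  | zero => intro t ht; simp [dyson]
  | succ n ih =>
    intro t ht
    have hta : a ≤ t := ht.1
    have hM0' : 0 ≤ M := hM0 (hta.trans ht.2)
    have hgc : Continuous fun u : ℝ =>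
        M * (‖(1 : B)‖ * ((M * (u - a)) ^ n / n.factorial)) := by
      continuity
    have key : ‖dyson A a (n + 1) t‖ ≤
        |∫ u in a..t, M * (‖(1 : B)‖ * ((M * (u - a)) ^ n / n.factorial))| := by
      show ‖∫ u in a..t, A u * dyson A a n u‖ ≤ _
      refine intervalIntegral.norm_integral_le_abs_of_norm_le ?_
        (hgc.intervalIntegrable a t)
      filter_upwards [MeasureTheory.ae_restrict_mem measurableSet_uIoc] with u hu
      rw [Set.uIoc_of_le hta] at hu
      have hu' : u ∈ Set.Icc a b := ⟨hu.1.le, hu.2.trans ht.2⟩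
      calc ‖A u * dyson A a n u‖ ≤ ‖A u‖ * ‖dyson A a n u‖ := norm_mul_le _ _
        _ ≤ M * (‖(1 : B)‖ * ((M * (u - a)) ^ n / n.factorial)) := by
            apply mul_le_mul (hM u hu') (ih u hu') (norm_nonneg _) hM0'
    have hfac : (n.factorial : ℝ) ≠ 0 := Nat.cast_ne_zero.mpr n.factorial_ne_zero
    have hval : (∫ u in a..t, M * (‖(1 : B)‖ * ((M * (u - a)) ^ n / n.factorial)))
        = ‖(1 : B)‖ * ((M * (t - a)) ^ (n + 1) / (n + 1).factorial) := by
      have h1 : (∫ u in a..t, M * (‖(1 : B)‖ * ((M * (u - a)) ^ n / n.factorial)))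
          = (‖(1 : B)‖ * (M ^ (n + 1) / n.factorial)) * ∫ u in a..t, (u - a) ^ n := by
        rw [← intervalIntegral.integral_const_mul]
        congr 1
        funext u
        rw [mul_pow]
        ring
      have h2 : (∫ u in a..t, (u - a) ^ n) = (t - a) ^ (n + 1) / (n + 1) := by
        have := intervalIntegral.integral_comp_sub_right (a := a) (b := t)
          (fun x => x ^ n) a
        rw [this, sub_self, integral_pow, zero_pow (Nat.succ_ne_zero n), sub_zero]
      rw [h1, h2, Nat.factorial_succ, mul_pow]
      push_cast
      field_simp
    rw [hval] at key
    refine key.trans (le_of_eq ?_)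
    rw [abs_of_nonneg]
    exact mul_nonneg (norm_nonneg _) (div_nonneg
      (pow_nonneg (mul_nonneg hM0' (sub_nonneg.mpr hta)) _) (by positivity))

lemma dyson_comp (A : ℝ → B) (hA : Continuous A) (t₁ s : ℝ) (h₁ : t₁ ≤ s) :
    ∀ n, ∀ t, s ≤ t →
      dyson A t₁ n t = ∑ k ∈ Finset.range (n + 1), dyson A s k t * dyson A t₁ (n - k) s := by
  intro n
  induction n with
  | zero => intro t ht; simp [dyson]
  | succ n ih =>
    intro t ht
    have hcont : Continuous fun u => A u * dyson A t₁ n u :=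
      hA.mul (dyson_continuous A hA t₁ n)
    have hsplit : dyson A t₁ (n + 1) t
        = dyson A t₁ (n + 1) s + ∫ u in s..t, A u * dyson A t₁ n u := by
      show (∫ u in t₁..t, A u * dyson A t₁ n u) = _
      rw [← intervalIntegral.integral_add_adjacent_intervals
        (hcont.intervalIntegrable t₁ s) (hcont.intervalIntegrable s t)]
      rfl
    have hsecond : (∫ u in s..t, A u * dyson A t₁ n u)
        = ∑ k ∈ Finset.range (n + 1), dyson A s (k + 1) t * dyson A t₁ (n - k) s := by
      have hcongr : (∫ u in s..t, A u * dyson A t₁ n u)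
          = ∫ u in s..t, ∑ k ∈ Finset.range (n + 1),
              (A u * dyson A s k u) * dyson A t₁ (n - k) s := by
        apply intervalIntegral.integral_congr
        intro u hu
        rw [Set.uIcc_of_le ht] at hu
        show A u * dyson A t₁ n u = _
        rw [ih u hu.1, Finset.mul_sum]
        simp [mul_assoc]
      rw [hcongr, intervalIntegral.integral_finset_sum]
      · refine Finset.sum_congr rfl fun k _ => ?_
        rw [integral_mul_const' (fun u => A u * dyson A s k u) (hA.mul (dyson_continuous A hA s k))]
        rfl
      · intro k _
        exact (((hA.mul (dyson_continuous A hA s k)).mul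
          continuous_const).intervalIntegrable s t)
    rw [hsplit, hsecond, Finset.sum_range_succ' (fun k => dyson A s k t * dyson A t₁ (n + 1 - k) s)]
    simp only [Nat.succ_sub_succ_eq_sub, dyson, Nat.sub_zero, one_mul]
    rw [add_comm]

lemma dyson_summable_norm (A : ℝ → B) (hA : Continuous A) (a b : ℝ) (hab : a ≤ b) :
    Summable fun n => ‖((-1 : ℝ) ^ n) • dyson A a n b‖ := by
  obtain ⟨M, hM⟩ := (isCompact_Icc (a := a) (b := b)).exists_bound_of_continuousOn
    hA.continuousOn
  refine Summable.of_norm_bounded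
    (g := fun n => ‖(1 : B)‖ * ((M * (b - a)) ^ n / n.factorial))
    ((Real.summable_pow_div_factorial _).mul_left _) fun n => ?_
  rw [norm_norm, norm_smul, norm_pow, norm_neg, norm_one, one_pow, one_mul]
  exact dyson_norm_le A hA a b M hM n b ⟨hab, le_refl b⟩

/-- Composition law for the time-ordered exponential:
`R(t₂, t₁) = R(t₂, s) · R(s, t₁)` for `t₁ ≤ s ≤ t₂`. -/
theorem timeOrderedExp_comp
    (A : ℝ → B) (hA : Continuous A) (t₁ s t₂ : ℝ) (h₁ : t₁ ≤ s) (h₂ : s ≤ t₂) :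
    timeOrderedExp A t₁ t₂ = timeOrderedExp A s t₂ * timeOrderedExp A t₁ s := by
  unfold timeOrderedExp
  rw [tsum_mul_tsum_eq_tsum_sum_antidiagonal_of_summable_norm
    (dyson_summable_norm A hA s t₂ h₂) (dyson_summable_norm A hA t₁ s h₁)]
  refine tsum_congr fun n => ?_
  have : ∀ kl ∈ Finset.HasAntidiagonal.antidiagonal n,
      ((-1 : ℝ) ^ kl.1 • dyson A s kl.1 t₂) * ((-1 : ℝ) ^ kl.2 • dyson A t₁ kl.2 s)
      = ((-1 : ℝ) ^ n) • (dyson A s kl.1 t₂ * dyson A t₁ kl.2 s) := by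
    intro kl hkl
    rw [smul_mul_smul_comm, ← pow_add, (Finset.HasAntidiagonal.mem_antidiagonal).mp hkl]
  rw [Finset.sum_congr rfl this, ← Finset.smul_sum]
  congr 1
  rw [Finset.Nat.sum_antidiagonal_eq_sum_range_succ_mk]
  exact dyson_comp A hA t₁ s h₁ n t₂ h₂
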